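/- Let P ∈ ℝ³ with ‖P‖ ≤ 1, let ε > 0 and r > 0, and let θ̄, φ̄, θ, φ ∈ ℝ with |θ̄ − θ| ≤ ε and |φ̄ − φ| ≤ ε. If ‖M(θ̄,φ̄)·P‖ > r + √2·ε, then ‖M(θ,φ)·P‖ > r. -/

import Mathlib

noncomputable section

open Real

/-- A matrix acting on Euclidean space. -/
def act {m n : ℕ} (A : Matrix (Fin m) (Fin n) ℝ) (v : EuclideanSpace ℝ (Fin n)) :
    EuclideanSpace ℝ (Fin m) :=
  Matrix.toEuclideanLin A v

/-- Operator norm of a real matrix with respect to the Euclidean norms. -/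
def opNorm {m n : ℕ} (A : Matrix (Fin m) (Fin n) ℝ) : ℝ :=
  ‖LinearMap.toContinuousLinearMap (Matrix.toEuclideanLin A)‖

/-- The 2×2 rotation matrix by angle `α`. -/
def R (α : ℝ) : Matrix (Fin 2) (Fin 2) ℝ :=
  !![cos α, -sin α; sin α, cos α]

/-- The orthogonal projection matrix in direction `X θ φ`. -/
def M (θ φ : ℝ) : Matrix (Fin 2) (Fin 3) ℝ :=
  !![-sin θ, cos θ, 0; -cos θ * cos φ, -sin θ * cos φ, sin φ]

/-- The unit vector parametrized by spherical coordinates. -/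
def X (θ φ : ℝ) : EuclideanSpace ℝ (Fin 3) :=
  (WithLp.equiv 2 (Fin 3 → ℝ)).symm ![cos θ * sin φ, sin θ * sin φ, cos φ]

/-- Rotation about the x-axis. -/
def Rx (α : ℝ) : Matrix (Fin 3) (Fin 3) ℝ :=
  !![1, 0, 0; 0, cos α, -sin α; 0, sin α, cos α]

/-- Rotation about the y-axis. -/
def Ry (α : ℝ) : Matrix (Fin 3) (Fin 3) ℝ :=
  !![cos α, 0, -sin α; 0, 1, 0; sin α, 0, cos α]

/-- Rotation about the z-axis. -/
def Rz (α : ℝ) : Matrix (Fin 3) (Fin 3) ℝ :=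
  !![cos α, -sin α, 0; sin α, cos α, 0; 0, 0, 1]

lemma norm_act_sub_act_le (P : EuclideanSpace ℝ (Fin 3)) (θ φ θ' φ' : ℝ) :
    ‖act (M θ' φ') P - act (M θ φ) P‖ ≤
      Real.sqrt ((θ' - θ) ^ 2 + (φ' - φ) ^ 2) * ‖P‖ := by
  set A := θ' - θ with hA
  set B := φ' - φ with hB
  set p0 := P 0; set p1 := P 1; set p2 := P 2
  set e := (EuclideanSpace.equiv (Fin 2) ℝ).symm with he
  set f1 : ℝ → ℝ := fun t => -sin (θ + t * A) * p0 + cos (θ + t * A) * p1 with hf1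
  set f2 : ℝ → ℝ := fun t =>
    -(cos (θ + t * A) * cos (φ + t * B)) * p0 + -(sin (θ + t * A) * cos (φ + t * B)) * p1
      + sin (φ + t * B) * p2 with hf2
  set d1 : ℝ → ℝ := fun t => -(A * (cos (θ + t * A) * p0 + sin (θ + t * A) * p1)) with hd1
  set d2 : ℝ → ℝ := fun t =>
    A * cos (φ + t * B) * (sin (θ + t * A) * p0 - cos (θ + t * A) * p1)
      + B * sin (φ + t * B) * (cos (θ + t * A) * p0 + sin (θ + t * A) * p1)
      + B * cos (φ + t * B) * p2 with hd2
  set g : ℝ → EuclideanSpace ℝ (Fin 2) := fun t => e ![f1 t, f2 t] with hg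
  have hnorm : ∀ x : Fin 2 → ℝ, ‖e x‖ = Real.sqrt (x 0 ^ 2 + x 1 ^ 2) := by
    intro x
    have h0 : e x 0 = x 0 := rfl
    have h1 : e x 1 = x 1 := rfl
    rw [EuclideanSpace.norm_eq]
    simp [Fin.sum_univ_two, sq_abs, h0, h1]
  have hPn : ‖P‖ = Real.sqrt (p0 ^ 2 + p1 ^ 2 + p2 ^ 2) := by
    rw [EuclideanSpace.norm_eq]
    simp [Fin.sum_univ_three, sq_abs]
    rfl
  have hderiv : ∀ t : ℝ, HasDerivAt g (e ![d1 t, d2 t]) t := by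
    intro t
    have hu : HasDerivAt (fun t : ℝ => θ + t * A) A t := by
      simpa using ((hasDerivAt_id t).mul_const A).const_add θ
    have hv : HasDerivAt (fun t : ℝ => φ + t * B) B t := by
      simpa using ((hasDerivAt_id t).mul_const B).const_add φ
    have h1 : HasDerivAt f1 (d1 t) t := by
      have h := (hu.sin.neg.mul_const p0).add (hu.cos.mul_const p1)
      refine h.congr_deriv ?_
      simp only [hd1]; ring
    have h2 : HasDerivAt f2 (d2 t) t := by
      have h := (((hu.cos.mul hv.cos).neg.mul_const p0).add
        ((hu.sin.mul hv.cos).neg.mul_const p1)).add (hv.sin.mul_const p2)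
      refine h.congr_deriv ?_
      simp only [hd2]; ring
    have h0 : HasDerivAt (fun t : ℝ => (![f1 t, f2 t] : Fin 2 → ℝ)) ![d1 t, d2 t] t := by
      rw [hasDerivAt_pi]
      intro i
      fin_cases i <;> simpa
    have := ((EuclideanSpace.equiv (Fin 2) ℝ).symm.toContinuousLinearMap).hasFDerivAt.comp_hasDerivAt t h0
    exact this
  have hbound : ∀ t : ℝ, ‖e ![d1 t, d2 t]‖ ≤
      Real.sqrt ((A ^ 2 + B ^ 2)) * ‖P‖ := by
    intro t
    rw [hnorm, hPn, ← Real.sqrt_mul (by positivity)]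
    apply Real.sqrt_le_sqrt
    set cu := cos (θ + t * A); set su := sin (θ + t * A)
    set cv := cos (φ + t * B); set sv := sin (φ + t * B)
    have hu' : su ^ 2 + cu ^ 2 = 1 := sin_sq_add_cos_sq _
    have hv' : sv ^ 2 + cv ^ 2 = 1 := sin_sq_add_cos_sq _
    set w1 := cu * p0 + su * p1 with hw1
    set w2 := su * p0 - cu * p1 with hw2
    have hw : w1 ^ 2 + w2 ^ 2 = p0 ^ 2 + p1 ^ 2 := by
      simp only [hw1, hw2]; linear_combination (p0 ^ 2 + p1 ^ 2) * hu'
    have hkey : (A * w1) ^ 2 + (A * cv * w2 + B * sv * w1 + B * cv * p2) ^ 2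
        + (B * cv * w1 - A * sv * w2 - B * sv * p2) ^ 2 + (B * w2 - A * p2) ^ 2
        = (A ^ 2 + B ^ 2) * (w1 ^ 2 + w2 ^ 2 + p2 ^ 2) := by
      linear_combination (B ^ 2 * w1 ^ 2 + A ^ 2 * w2 ^ 2 + B ^ 2 * p2 ^ 2
        + 2 * A * B * w2 * p2) * hv'
    have hd1t : d1 t = -(A * w1) := by simp only [hd1, hw1]; rfl
    have hd2t : d2 t = A * cv * w2 + B * sv * w1 + B * cv * p2 := by
      simp only [hd2, hw1, hw2]; rfl
    have h2 : (A ^ 2 + B ^ 2) * (w1 ^ 2 + w2 ^ 2 + p2 ^ 2)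
        = (A ^ 2 + B ^ 2) * (p0 ^ 2 + p1 ^ 2 + p2 ^ 2) := by
      linear_combination (A ^ 2 + B ^ 2) * hw
    have h3 : (-(A * w1)) ^ 2 = (A * w1) ^ 2 := by ring
    rw [hd1t, hd2t]
    simp only [Matrix.cons_val_zero, Matrix.cons_val_one, Matrix.head_cons]
    rw [h3]
    linarith [hkey, h2, sq_nonneg (B * cv * w1 - A * sv * w2 - B * sv * p2),
      sq_nonneg (B * w2 - A * p2)]
  have hmvt := norm_image_sub_le_of_norm_deriv_le_segment_01'
    (f := g) (f' := fun t => e ![d1 t, d2 t])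
    (fun x _ => (hderiv x).hasDerivWithinAt) (fun x _ => hbound x)
  have hg1 : g 1 = act (M θ' φ') P := by
    ext i
    fin_cases i <;>
      simp [hg, he, hf1, hf2, hA, hB, act, M, Matrix.toEuclideanLin_apply, Matrix.mulVec,
        dotProduct, Fin.sum_univ_three] <;> ring_nf <;> rfl
  have hg0 : g 0 = act (M θ φ) P := by
    ext i
    fin_cases i <;>
      simp [hg, he, hf1, hf2, act, M, Matrix.toEuclideanLin_apply, Matrix.mulVec,
        dotProduct, Fin.sum_univ_three] <;> ring_nf <;> rfl
  rw [hg1, hg0] at hmvt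
  exact hmvt

/-- A lower bound on the norm of the projection is stable under perturbation of the angles. -/
theorem norm_M_mulVec_gt (P : EuclideanSpace ℝ (Fin 3)) (hP : ‖P‖ ≤ 1)
    (ε r θ' φ' θ φ : ℝ) (hε : 0 < ε) (hr : 0 < r) (hθ : |θ' - θ| ≤ ε) (hφ : |φ' - φ| ≤ ε)
    (h : ‖act (M θ' φ') P‖ > r + Real.sqrt 2 * ε) :
    ‖act (M θ φ) P‖ > r := by
  have hd := norm_act_sub_act_le P θ φ θ' φ'
  have tri : ‖act (M θ' φ') P‖ - ‖act (M θ φ) P‖ ≤ ‖act (M θ' φ') P - act (M θ φ) P‖ :=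
    norm_sub_norm_le _ _
  have h1 : Real.sqrt ((θ' - θ) ^ 2 + (φ' - φ) ^ 2) ≤ Real.sqrt 2 * ε := by
    have e1 : (θ' - θ) ^ 2 ≤ ε ^ 2 := by
      rw [← sq_abs]; exact pow_le_pow_left₀ (abs_nonneg _) hθ 2
    have e2 : (φ' - φ) ^ 2 ≤ ε ^ 2 := by
      rw [← sq_abs]; exact pow_le_pow_left₀ (abs_nonneg _) hφ 2
    rw [show Real.sqrt 2 * ε = Real.sqrt (2 * ε ^ 2) by
      rw [Real.sqrt_mul (by norm_num), Real.sqrt_sq hε.le]]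
    apply Real.sqrt_le_sqrt
    linarith
  have h4 : ‖act (M θ' φ') P - act (M θ φ) P‖ ≤ Real.sqrt 2 * ε := by
    calc ‖act (M θ' φ') P - act (M θ φ) P‖ ≤ Real.sqrt ((θ' - θ) ^ 2 + (φ' - φ) ^ 2) * ‖P‖ := hd
      _ ≤ (Real.sqrt 2 * ε) * 1 :=
        mul_le_mul h1 hP (norm_nonneg _) (by positivity)
      _ = Real.sqrt 2 * ε := mul_one _
  linarith
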